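/- Let G be a graph of conductance Φ_G and let T* be an optimal HC tree of G whose dense branch consists only of the root of T*. Then for every HC tree T of G, cost_G(T) ≤ cost_G(T*)/Φ_G. -/

import Mathlib

open Finset

/-- A hierarchical clustering (HC) tree: a binary tree with vertex-labelled leaves. -/
inductive HCTree (V : Type) where
  | leaf (v : V) : HCTree V
  | node (l r : HCTree V) : HCTree V

namespace HCTree

variable {V : Type} [Fintype V] [DecidableEq V]

/-- The list of leaf labels of an HC tree. -/
def leafList : HCTree V → List V
  | leaf v => [v]
  | node l r => leafList l ++ leafList r

/-- The set of leaves of an HC tree. -/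
def leaves (t : HCTree V) : Finset V := t.leafList.toFinset

/-- Total weight of (ordered) pairs between two vertex sets:
`w(S,T) = ∑_{u ∈ S, v ∈ T} w(u,v)`. -/
def cut (w : V → V → ℝ) (S T : Finset V) : ℝ := ∑ u ∈ S, ∑ v ∈ T, w u v

/-- The (weighted) degree of a vertex: `d_u = ∑_v w(u,v)`. -/
def deg (w : V → V → ℝ) (u : V) : ℝ := ∑ v, w u v

/-- The volume of a vertex set: `vol(S) = ∑_{u ∈ S} d_u`. -/
def vol (w : V → V → ℝ) (S : Finset V) : ℝ := ∑ u ∈ S, deg w u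

/-- Dasgupta's cost of an HC tree, via the equivalent internal-node formula:
`cost(T) = ∑_{N → (N₁,N₂)} |leaves(T[N])| · w(leaves(N₁), leaves(N₂))`. -/
def cost (w : V → V → ℝ) : HCTree V → ℝ
  | leaf _ => 0
  | node l r =>
      ((leaves (node l r)).card : ℝ) * cut w (leaves l) (leaves r)
        + cost w l + cost w r

/-- `t` is an HC tree of the graph on vertex set `V`: its leaves are distinct
and are exactly the vertices of `V`. -/
def isHC (t : HCTree V) : Prop := t.leafList.Nodup ∧ t.leaves = Finset.univ

end HCTree

namespace HCTree

variable {V : Type} [Fintype V] [DecidableEq V]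

/-- `DenseBranch w t k A B` says that `(A 0, …, A k)` is the dense branch of the HC tree `t`,
with `B (i+1)` the sibling of `A (i+1)`: `A 0` is the root, each `A (i+1)` is the child of
`A i` of higher volume, every node on the branch has volume greater than `vol(G)/2`,
and both children of the final node `A k` have volume at most `vol(G)/2`. -/
def DenseBranch (w : V → V → ℝ) (t : HCTree V) (k : ℕ)
    (A B : ℕ → HCTree V) : Prop :=
  A 0 = t ∧
  (∀ i < k,
      (A i = HCTree.node (A (i+1)) (B (i+1)) ∨ A i = HCTree.node (B (i+1)) (A (i+1))) ∧
      vol w (leaves (B (i+1))) ≤ vol w (leaves (A (i+1)))) ∧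
  (∀ i ≤ k, vol w (Finset.univ : Finset V) / 2 < vol w (leaves (A i))) ∧
  (∃ l r, A k = HCTree.node l r ∧
      vol w (leaves l) ≤ vol w (Finset.univ : Finset V) / 2 ∧
      vol w (leaves r) ≤ vol w (Finset.univ : Finset V) / 2)

end HCTree

namespace HCTree

variable {V : Type} [Fintype V] [DecidableEq V]

lemma cut_nonneg (w : V → V → ℝ) (hw : ∀ u v, 0 ≤ w u v) (S T : Finset V) :
    0 ≤ cut w S T :=
  Finset.sum_nonneg fun _ _ => Finset.sum_nonneg fun _ _ => hw _ _

lemma cut_comm (w : V → V → ℝ) (hsymm : ∀ u v, w u v = w v u) (S T : Finset V) :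
    cut w S T = cut w T S := by
  unfold cut
  rw [Finset.sum_comm]
  exact Finset.sum_congr rfl fun u _ => Finset.sum_congr rfl fun v _ => hsymm v u

lemma cut_union_left (w : V → V → ℝ) {S T : Finset V} (h : Disjoint S T) (U : Finset V) :
    cut w (S ∪ T) U = cut w S U + cut w T U := by
  unfold cut; exact Finset.sum_union h

lemma cut_union_right (w : V → V → ℝ) {S T : Finset V} (h : Disjoint S T) (U : Finset V) :
    cut w U (S ∪ T) = cut w U S + cut w U T := by
  unfold cut; rw [← Finset.sum_add_distrib]
  exact Finset.sum_congr rfl fun u _ => Finset.sum_union h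

lemma cut_mono_right (w : V → V → ℝ) (hw : ∀ u v, 0 ≤ w u v) (S : Finset V)
    {T U : Finset V} (h : T ⊆ U) : cut w S T ≤ cut w S U :=
  Finset.sum_le_sum fun u _ =>
    Finset.sum_le_sum_of_subset_of_nonneg h fun v _ _ => hw u v

lemma vol_eq_cut_univ (w : V → V → ℝ) (S : Finset V) :
    vol w S = cut w S Finset.univ := rfl

lemma cost_nonneg (w : V → V → ℝ) (hw : ∀ u v, 0 ≤ w u v) :
    ∀ t : HCTree V, 0 ≤ cost w t
  | leaf _ => le_of_eq rfl
  | node l r => by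
    have h1 := cost_nonneg w hw l
    have h2 := cost_nonneg w hw r
    have h3 := cut_nonneg w hw (leaves l) (leaves r)
    unfold cost
    have : (0:ℝ) ≤ ((leaves (node l r)).card : ℝ) := Nat.cast_nonneg _
    nlinarith

/-- Sum of the cut terms over all internal nodes. -/
def icut (w : V → V → ℝ) : HCTree V → ℝ
  | leaf _ => 0
  | node l r => cut w (leaves l) (leaves r) + icut w l + icut w r

lemma icut_nonneg (w : V → V → ℝ) (hw : ∀ u v, 0 ≤ w u v) :
    ∀ t : HCTree V, 0 ≤ icut w t
  | leaf _ => le_of_eq rfl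
  | node l r => by
    have h1 := icut_nonneg w hw l
    have h2 := icut_nonneg w hw r
    have h3 := cut_nonneg w hw (leaves l) (leaves r)
    unfold icut; linarith

lemma leaves_node (l r : HCTree V) : leaves (node l r) = leaves l ∪ leaves r := by
  simp [leaves, leafList]

lemma cost_le_card_mul_icut (w : V → V → ℝ) (hw : ∀ u v, 0 ≤ w u v) :
    ∀ t : HCTree V, cost w t ≤ (Fintype.card V : ℝ) * icut w t
  | leaf _ => by simp [cost, icut]
  | node l r => by
    have h1 := cost_le_card_mul_icut w hw l
    have h2 := cost_le_card_mul_icut w hw r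
    have h3 := cut_nonneg w hw (leaves l) (leaves r)
    have hcard : ((leaves (node l r)).card : ℝ) ≤ (Fintype.card V : ℝ) := by
      exact_mod_cast Finset.card_le_univ _
    unfold cost icut
    nlinarith

lemma disjoint_leaves {l r : HCTree V} (h : (node l r).leafList.Nodup) :
    Disjoint (leaves l) (leaves r) := by
  have := (List.nodup_append'.mp h).2.2
  simp only [leaves, Finset.disjoint_left]
  intro a hal har
  exact this (List.mem_toFinset.mp hal) (List.mem_toFinset.mp har)

lemma two_icut_le (w : V → V → ℝ) (hw : ∀ u v, 0 ≤ w u v)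
    (hsymm : ∀ u v, w u v = w v u) :
    ∀ t : HCTree V, t.leafList.Nodup → 2 * icut w t ≤ cut w (leaves t) (leaves t)
  | leaf _, _ => by
    simp [icut]
    exact cut_nonneg w hw _ _
  | node l r, h => by
    have hnl : l.leafList.Nodup := (List.nodup_append.mp h).1
    have hnr : r.leafList.Nodup := (List.nodup_append.mp h).2.1
    have hd : Disjoint (leaves l) (leaves r) := disjoint_leaves h
    have h1 := two_icut_le w hw hsymm l hnl
    have h2 := two_icut_le w hw hsymm r hnr
    have hsym := cut_comm w hsymm (leaves l) (leaves r)
    rw [leaves_node, cut_union_left w hd, cut_union_right w hd, cut_union_right w hd]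
    unfold icut
    linarith

lemma cost_le_n_vol_half (w : V → V → ℝ) (hw : ∀ u v, 0 ≤ w u v)
    (hsymm : ∀ u v, w u v = w v u) (t : HCTree V) (ht : isHC t) :
    cost w t ≤ (Fintype.card V : ℝ) * vol w (Finset.univ : Finset V) / 2 := by
  have h1 := cost_le_card_mul_icut w hw t
  have h2 := two_icut_le w hw hsymm t ht.1
  rw [ht.2] at h2
  have h3 : cut w (Finset.univ : Finset V) (Finset.univ : Finset V)
      ≤ vol w (Finset.univ : Finset V) := le_of_eq (vol_eq_cut_univ w _).symm
  have hn : (0:ℝ) ≤ (Fintype.card V : ℝ) := Nat.cast_nonneg _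
  nlinarith

lemma leafList_ne_nil : ∀ t : HCTree V, t.leafList ≠ []
  | leaf v => by simp [leafList]
  | node l r => by
    simp only [leafList, ne_eq, List.append_eq_nil_iff]
    intro ⟨h, _⟩; exact leafList_ne_nil l h

lemma leaves_nonempty (t : HCTree V) : (leaves t).Nonempty := by
  rcases List.exists_mem_of_ne_nil _ (leafList_ne_nil t) with ⟨a, ha⟩
  exact ⟨a, List.mem_toFinset.mpr ha⟩

end HCTree

open HCTree in
/-- Let `G` have conductance `Φ_G` and let `T*` be an optimal HC tree of `G`
whose dense branch consists only of the root (i.e. both children of the root have volume at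
most `vol(G)/2`). Then every HC tree `T` of `G` satisfies `cost_G(T) ≤ cost_G(T*)/Φ_G`. -/
theorem cost_le_opt_div_phi_short_branch {V : Type} [Fintype V] [DecidableEq V]
    (w : V → V → ℝ) (hw : ∀ u v, 0 ≤ w u v) (hsymm : ∀ u v, w u v = w v u)
    (Φ : ℝ) (hΦ0 : 0 < Φ)
    (hΦ : ∀ S : Finset V, S.Nonempty → vol w S ≤ vol w (Finset.univ : Finset V) / 2 →
      Φ * vol w S ≤ cut w S Sᶜ)
    (Tstar : HCTree V) (hTstar : isHC Tstar)
    (hopt : ∀ t : HCTree V, isHC t → cost w Tstar ≤ cost w t)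
    (A B : ℕ → HCTree V) (hdb : DenseBranch w Tstar 0 A B)
    (T : HCTree V) (hT : isHC T) :
    cost w T ≤ cost w Tstar / Φ := by
  obtain ⟨hA0, _, _, l, r, hlr, hvl, hvr⟩ := hdb
  rw [hA0] at hlr
  -- basic structure
  have hnodup : Tstar.leafList.Nodup := hTstar.1
  have huniv : leaves Tstar = Finset.univ := hTstar.2
  rw [hlr] at hnodup huniv
  have hd : Disjoint (leaves l) (leaves r) := disjoint_leaves hnodup
  rw [leaves_node] at huniv
  have hcompl : leaves r = (leaves l)ᶜ := by
    rw [Finset.compl_eq_univ_sdiff, ← huniv, Finset.union_sdiff_cancel_left hd]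
  -- vol l + vol r = vol univ
  have hvolsum : vol w (leaves l) + vol w (leaves r) = vol w (Finset.univ : Finset V) := by
    unfold vol
    rw [← Finset.sum_union hd, huniv]
  have hhalf : vol w (leaves l) = vol w (Finset.univ : Finset V) / 2 := by linarith
  -- conductance bound
  have hcond := hΦ (leaves l) (leaves_nonempty l) (le_of_eq hhalf)
  rw [← hcompl] at hcond
  -- cost Tstar ≥ n * cut
  have hn : ((leaves Tstar).card : ℝ) = (Fintype.card V : ℝ) := by
    rw [hTstar.2]; simp
  have hcostT : (Fintype.card V : ℝ) * cut w (leaves l) (leaves r) ≤ cost w Tstar := by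
    rw [hlr]
    unfold cost
    have h1 := cost_nonneg w hw l
    have h2 := cost_nonneg w hw r
    rw [← hlr, hn]
    linarith
  -- cost T ≤ n * vol/2
  have hcT := cost_le_n_vol_half w hw hsymm T hT
  have hn0 : (0:ℝ) ≤ (Fintype.card V : ℝ) := Nat.cast_nonneg _
  rw [le_div_iff₀ hΦ0]
  calc cost w T * Φ ≤ ((Fintype.card V : ℝ) * vol w univ / 2) * Φ :=
        mul_le_mul_of_nonneg_right hcT hΦ0.le
    _ = (Fintype.card V : ℝ) * (Φ * vol w (leaves l)) := by rw [hhalf]; ring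
    _ ≤ (Fintype.card V : ℝ) * cut w (leaves l) (leaves r) :=
        mul_le_mul_of_nonneg_left hcond hn0
    _ ≤ cost w Tstar := hcostT
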